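/- Let R be a commutative integral domain with fraction field K, P ∈ K^{n×m}, C ∈ K^{m×n} a stabilizing controller (i.e. the four matrices (I-PC)⁻¹, (I-PC)⁻¹P, C(I-PC)⁻¹, (I-CP)⁻¹ all have entries in R). Let G = (g_{ij}) ∈ K^{n×q}. If for all i, j there exist matrices A_{ij}, B_{ij} over R with g_{ij}·I = A_{ij} + B_{ij}C (as n×n matrices over K), then g_{ij}·[-(I-PC)⁻¹P, (I-PC)⁻¹] has all entries in R for every i, j. -/
import Mathlib


open Matrix

/-- A matrix over the fraction field is *stable* if all its entries lie in `R`. -/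
def MatStable (R : Type*) [CommRing R] [IsDomain R] {α β : Type*}
    (M : Matrix α β (FractionRing R)) : Prop :=
  ∀ i j, ∃ r : R, algebraMap R (FractionRing R) r = M i j

section Aux

variable {R : Type*} [CommRing R] [IsDomain R]

lemma MatStable.add' {α β : Type*} {M N : Matrix α β (FractionRing R)}
    (hM : MatStable R M) (hN : MatStable R N) : MatStable R (M + N) := by
  intro i j
  obtain ⟨a, ha⟩ := hM i j
  obtain ⟨b, hb⟩ := hN i j
  exact ⟨a + b, by simp [Matrix.add_apply, ha, hb]⟩

lemma MatStable.neg' {α β : Type*} {M : Matrix α β (FractionRing R)}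
    (hM : MatStable R M) : MatStable R (-M) := by
  intro i j
  obtain ⟨a, ha⟩ := hM i j
  exact ⟨-a, by simp [Matrix.neg_apply, ha]⟩

lemma MatStable.one' {α : Type*} [DecidableEq α] :
    MatStable R (1 : Matrix α α (FractionRing R)) := by
  intro i j
  by_cases h : i = j
  · exact ⟨1, by simp [h, Matrix.one_apply]⟩
  · exact ⟨0, by simp [Matrix.one_apply, h]⟩

lemma MatStable.mul' {α β γ : Type*} [Fintype β] {M : Matrix α β (FractionRing R)}
    {N : Matrix β γ (FractionRing R)}
    (hM : MatStable R M) (hN : MatStable R N) : MatStable R (M * N) := by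
  intro i j
  have : ∀ k, M i k * N k j ∈ (algebraMap R (FractionRing R)).range := by
    intro k
    obtain ⟨a, ha⟩ := hM i k
    obtain ⟨b, hb⟩ := hN k j
    exact ⟨a * b, by simp [ha, hb]⟩
  have hsum : (∑ k, M i k * N k j) ∈ (algebraMap R (FractionRing R)).range :=
    Subring.sum_mem _ (fun k _ => this k)
  simpa [Matrix.mul_apply] using hsum

end Aux

theorem stmt6 (R : Type*) [CommRing R] [IsDomain R] (n m q : ℕ)
    (P : Matrix (Fin n) (Fin m) (FractionRing R)) (C : Matrix (Fin m) (Fin n) (FractionRing R))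
    (G : Matrix (Fin n) (Fin q) (FractionRing R))
    (h1 : (1 - P * C).det ≠ 0) (h2 : (1 - C * P).det ≠ 0)
    (hs1 : MatStable R (1 - P * C)⁻¹) (hs2 : MatStable R ((1 - P * C)⁻¹ * P))
    (hs3 : MatStable R (C * (1 - P * C)⁻¹)) (hs4 : MatStable R (1 - C * P)⁻¹)
    (hIM : ∀ i j, ∃ (A : Matrix (Fin n) (Fin n) (FractionRing R))
        (B : Matrix (Fin n) (Fin m) (FractionRing R)),
      MatStable R A ∧ MatStable R B ∧
        G i j • (1 : Matrix (Fin n) (Fin n) (FractionRing R)) = A + B * C) :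
    ∀ i j, MatStable R (G i j • (-((1 - P * C)⁻¹ * P))) ∧
      MatStable R (G i j • (1 - P * C)⁻¹) := by
  have hu1 : IsUnit (1 - P * C).det := isUnit_iff_ne_zero.mpr h1
  have hu2 : IsUnit (1 - C * P).det := isUnit_iff_ne_zero.mpr h2
  -- key identity: C * (1 - P*C)⁻¹ = (1 - C*P)⁻¹ * C
  have hswap : C * (1 - P * C)⁻¹ = (1 - C * P)⁻¹ * C := by
    have h : (1 - C * P) * (C * (1 - P * C)⁻¹) = C := by
      have : (1 - C * P) * C = C * (1 - P * C) := by
        rw [Matrix.sub_mul, Matrix.mul_sub, Matrix.one_mul, Matrix.mul_one, Matrix.mul_assoc]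
      rw [← Matrix.mul_assoc, this, Matrix.mul_assoc,
        Matrix.mul_nonsing_inv _ hu1, Matrix.mul_one]
    calc C * (1 - P * C)⁻¹
        = (1 - C * P)⁻¹ * ((1 - C * P) * (C * (1 - P * C)⁻¹)) := by
          rw [← Matrix.mul_assoc, Matrix.nonsing_inv_mul _ hu2, Matrix.one_mul]
      _ = (1 - C * P)⁻¹ * C := by rw [h]
  -- C * (1 - P*C)⁻¹ * P = (1 - C*P)⁻¹ - 1
  have hkey : C * ((1 - P * C)⁻¹ * P) = (1 - C * P)⁻¹ - 1 := by
    rw [← Matrix.mul_assoc, hswap, Matrix.mul_assoc]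
    have e : (1 - C * P)⁻¹ * (C * P) = (1 - C * P)⁻¹ * (1 - (1 - C * P)) := by
      rw [sub_sub_cancel]
    rw [e, Matrix.mul_sub, Matrix.mul_one, Matrix.nonsing_inv_mul _ hu2]
  have hCQP : MatStable R (C * ((1 - P * C)⁻¹ * P)) := by
    rw [hkey, sub_eq_add_neg]
    exact hs4.add' MatStable.one'.neg'
  intro i j
  obtain ⟨A, B, hA, hB, hAB⟩ := hIM i j
  have e1 : G i j • (1 - P * C)⁻¹ = A * (1 - P * C)⁻¹ + B * (C * (1 - P * C)⁻¹) := by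
    calc G i j • (1 - P * C)⁻¹ = (G i j • (1 : Matrix (Fin n) (Fin n) (FractionRing R))) * (1 - P * C)⁻¹ := by
          rw [Matrix.smul_mul, Matrix.one_mul]
      _ = A * (1 - P * C)⁻¹ + B * (C * (1 - P * C)⁻¹) := by
          rw [hAB, Matrix.add_mul, Matrix.mul_assoc]
  have e2 : G i j • ((1 - P * C)⁻¹ * P)
      = A * ((1 - P * C)⁻¹ * P) + B * (C * ((1 - P * C)⁻¹ * P)) := by
    calc G i j • ((1 - P * C)⁻¹ * P)
        = (G i j • (1 : Matrix (Fin n) (Fin n) (FractionRing R))) * ((1 - P * C)⁻¹ * P) := by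
          rw [Matrix.smul_mul, Matrix.one_mul]
      _ = _ := by rw [hAB, Matrix.add_mul, Matrix.mul_assoc]
  constructor
  · have : G i j • (-((1 - P * C)⁻¹ * P)) = -(G i j • ((1 - P * C)⁻¹ * P)) := by
      rw [smul_neg]
    rw [this, e2]
    exact ((hA.mul' hs2).add' (hB.mul' hCQP)).neg'
  · rw [e1]
    exact (hA.mul' hs1).add' (hB.mul' hs3)
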